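/- If r1·s2 − r2·s1 ≠ 0, then the matrix Aξ has rank exactly 4, the matrix Aη has rank exactly 4, and moreover ker(Aξ) = ker(Aη) is a one-dimensional subspace of ℝ⁵. (In the paper this is the statement that the ruled minimal submanifold associated to a 1-isotropic surface has rank ρ = 4, i.e. one-dimensional relative nullity in the essential block, on an open dense subset.) -/

import Mathlib

open Matrix

/-- The shape operator `A_ξ` (essential 5×5 block) of the cone of the ruled
minimal submanifold associated to a 1-isotropic surface. -/
def Axi (p1 p2 h1 h2 κ r1 r2 s1 s2 : ℝ) : Matrix (Fin 5) (Fin 5) ℝ :=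
  !![0,  p1, p2,       0,  0;
     p1, h1 + κ, h2,   r1, s1;
     p2, h2, -h1 - κ,  r2, s2;
     0,  r1, r2,       0,  0;
     0,  s1, s2,       0,  0]

/-- The shape operator `A_η` (essential 5×5 block) of the cone of the ruled
minimal submanifold associated to a 1-isotropic surface. -/
def Aeta (p1 p2 h1 h2 κ r1 r2 s1 s2 : ℝ) : Matrix (Fin 5) (Fin 5) ℝ :=
  !![0,   p2, -p1,      0,   0;
     p2,  h2, κ - h1,   r2,  s2;
     -p1, κ - h1, -h2,  -r1, -s1;
     0,   r2, -r1,      0,   0;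
     0,   s2, -s1,      0,   0]

/-- General kernel computation for matrices of this shape. -/
lemma ker_gen (p1 p2 a b c r1 r2 s1 s2 : ℝ) (h : r1 * s2 - r2 * s1 ≠ 0) :
    LinearMap.ker (Matrix.toLin'
      (!![0, p1, p2, 0, 0;
          p1, a, b, r1, s1;
          p2, b, c, r2, s2;
          0, r1, r2, 0, 0;
          0, s1, s2, 0, 0] : Matrix (Fin 5) (Fin 5) ℝ)) =
    Submodule.span ℝ {![r1 * s2 - r2 * s1, 0, 0, p2 * s1 - p1 * s2, p1 * r2 - p2 * r1]} := by
  ext v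
  simp only [LinearMap.mem_ker, Matrix.toLin'_apply, Submodule.mem_span_singleton]
  constructor
  · intro hv
    have e0 := congrFun hv 0
    have e1 := congrFun hv 1
    have e2 := congrFun hv 2
    have e3 := congrFun hv 3
    have e4 := congrFun hv 4
    simp [Matrix.mulVec, dotProduct, Fin.sum_univ_five] at e0 e1 e2 e3 e4
    have hv1 : v 1 = 0 := by
      have : v 1 * (r1 * s2 - r2 * s1) = 0 := by linear_combination s2 * e3 - r2 * e4
      rcases mul_eq_zero.mp this with h' | h'
      · exact h'
      · exact absurd h' h
    have hv2 : v 2 = 0 := by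
      have : v 2 * (r1 * s2 - r2 * s1) = 0 := by linear_combination r1 * e4 - s1 * e3
      rcases mul_eq_zero.mp this with h' | h'
      · exact h'
      · exact absurd h' h
    have key : (r1 * s2 - r2 * s1) • v =
        v 0 • ![r1 * s2 - r2 * s1, 0, 0, p2 * s1 - p1 * s2, p1 * r2 - p2 * r1] := by
      funext i
      fin_cases i
      · simp only [Pi.smul_apply, smul_eq_mul]; simp; ring
      · simp only [Pi.smul_apply, smul_eq_mul]; simp [hv1]
      · simp only [Pi.smul_apply, smul_eq_mul]; simp [hv2]
      · simp only [Pi.smul_apply, smul_eq_mul]; simp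
        linear_combination s2 * e1 - s1 * e2 + (s1 * b - s2 * a) * hv1 + (s1 * c - s2 * b) * hv2
      · simp only [Pi.smul_apply, smul_eq_mul]; simp
        linear_combination r1 * e2 - r2 * e1 + (r2 * a - r1 * b) * hv1 + (r2 * b - r1 * c) * hv2
    refine ⟨v 0 / (r1 * s2 - r2 * s1), ?_⟩
    have := congrArg (fun x => (r1 * s2 - r2 * s1)⁻¹ • x) key
    simp only [smul_smul, inv_mul_cancel₀ h, one_smul] at this
    rw [div_eq_inv_mul]
    exact this.symm
  · rintro ⟨k, rfl⟩
    funext i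
    fin_cases i <;>
      simp [Matrix.mulVec, dotProduct, Fin.sum_univ_five] <;> ring

/-- If `r1·s2 − r2·s1 ≠ 0` then both shape operators have rank exactly 4 and a
common one-dimensional kernel (the relative nullity). -/
theorem rank_eq_four_and_ker_eq
    (p1 p2 h1 h2 κ r1 r2 s1 s2 : ℝ) (h : r1 * s2 - r2 * s1 ≠ 0) :
    (Axi p1 p2 h1 h2 κ r1 r2 s1 s2).rank = 4 ∧
    (Aeta p1 p2 h1 h2 κ r1 r2 s1 s2).rank = 4 ∧
    LinearMap.ker (Matrix.toLin' (Axi p1 p2 h1 h2 κ r1 r2 s1 s2)) =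
      LinearMap.ker (Matrix.toLin' (Aeta p1 p2 h1 h2 κ r1 r2 s1 s2)) ∧
    Module.finrank ℝ
      (LinearMap.ker (Matrix.toLin' (Axi p1 p2 h1 h2 κ r1 r2 s1 s2))) = 1 := by
  have h' : r2 * (-s1) - (-r1) * s2 ≠ 0 := by
    rw [show r2 * (-s1) - (-r1) * s2 = r1 * s2 - r2 * s1 by ring]; exact h
  have hxi := ker_gen p1 p2 (h1 + κ) h2 (-h1 - κ) r1 r2 s1 s2 h
  have heta := ker_gen p2 (-p1) h2 (κ - h1) (-h2) r2 (-r1) s2 (-s1) h'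
  have hvec : (![r2 * (-s1) - (-r1) * s2, 0, 0, (-p1) * s2 - p2 * (-s1),
        p2 * (-r1) - (-p1) * r2] : Fin 5 → ℝ) =
      ![r1 * s2 - r2 * s1, 0, 0, p2 * s1 - p1 * s2, p1 * r2 - p2 * r1] := by
    funext i; fin_cases i <;> simp <;> ring_nf
  rw [hvec] at heta
  have hAxi : Axi p1 p2 h1 h2 κ r1 r2 s1 s2 =
      !![0, p1, p2, 0, 0; p1, h1 + κ, h2, r1, s1; p2, h2, -h1 - κ, r2, s2;
         0, r1, r2, 0, 0; 0, s1, s2, 0, 0] := rfl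
  have hAeta : Aeta p1 p2 h1 h2 κ r1 r2 s1 s2 =
      !![0, p2, -p1, 0, 0; p2, h2, κ - h1, r2, s2; -p1, κ - h1, -h2, -r1, -s1;
         0, r2, -r1, 0, 0; 0, s2, -s1, 0, 0] := rfl
  have hAeta' : Aeta p1 p2 h1 h2 κ r1 r2 s1 s2 =
      !![0, p2, -p1, 0, 0; p2, h2, κ - h1, r2, s2; -p1, κ - h1, -h2, r2 * 0 - r1, -s1;
         0, r2, -r1, 0, 0; 0, s2, -s1, 0, 0] := by
    rw [hAeta]; norm_num
  have kerXi : LinearMap.ker (Matrix.toLin' (Axi p1 p2 h1 h2 κ r1 r2 s1 s2)) =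
      Submodule.span ℝ {![r1 * s2 - r2 * s1, 0, 0, p2 * s1 - p1 * s2, p1 * r2 - p2 * r1]} := by
    rw [hAxi]; exact hxi
  have kerEta : LinearMap.ker (Matrix.toLin' (Aeta p1 p2 h1 h2 κ r1 r2 s1 s2)) =
      Submodule.span ℝ {![r1 * s2 - r2 * s1, 0, 0, p2 * s1 - p1 * s2, p1 * r2 - p2 * r1]} := by
    have : Aeta p1 p2 h1 h2 κ r1 r2 s1 s2 =
        !![0, p2, -p1, 0, 0; p2, h2, κ - h1, r2, s2; -p1, κ - h1, -h2, -r1, -s1;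
           0, r2, -r1, 0, 0; 0, s2, -s1, 0, 0] := rfl
    rw [this]
    convert heta using 3
  have hwne : (![r1 * s2 - r2 * s1, 0, 0, p2 * s1 - p1 * s2, p1 * r2 - p2 * r1] : Fin 5 → ℝ) ≠ 0 := by
    intro h0
    exact h (by simpa using congrFun h0 0)
  have hfin : Module.finrank ℝ
      (LinearMap.ker (Matrix.toLin' (Axi p1 p2 h1 h2 κ r1 r2 s1 s2))) = 1 := by
    rw [kerXi]; exact finrank_span_singleton hwne
  have hfinEta : Module.finrank ℝ
      (LinearMap.ker (Matrix.toLin' (Aeta p1 p2 h1 h2 κ r1 r2 s1 s2))) = 1 := by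
    rw [kerEta]; exact finrank_span_singleton hwne
  have rankXi : (Axi p1 p2 h1 h2 κ r1 r2 s1 s2).rank = 4 := by
    have := LinearMap.finrank_range_add_finrank_ker
      (Matrix.toLin' (Axi p1 p2 h1 h2 κ r1 r2 s1 s2))
    rw [hfin, Module.finrank_pi, Fintype.card_fin] at this
    simp only [Matrix.rank, ← Matrix.toLin'_apply']
    change Module.finrank ℝ (LinearMap.range (Matrix.toLin' _)) = 4
    exact (by omega : ∀ a : ℕ, a + 1 = 5 → a = 4) _ this
  have rankEta : (Aeta p1 p2 h1 h2 κ r1 r2 s1 s2).rank = 4 := by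
    have := LinearMap.finrank_range_add_finrank_ker
      (Matrix.toLin' (Aeta p1 p2 h1 h2 κ r1 r2 s1 s2))
    rw [hfinEta, Module.finrank_pi, Fintype.card_fin] at this
    simp only [Matrix.rank, ← Matrix.toLin'_apply']
    change Module.finrank ℝ (LinearMap.range (Matrix.toLin' _)) = 4
    exact (by omega : ∀ a : ℕ, a + 1 = 5 → a = 4) _ this
  exact ⟨rankXi, rankEta, kerXi.trans kerEta.symm, hfin⟩
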